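/- For any pooling scheme and infection vector, the number Z of infection-status assignments consistent with the test outcomes satisfies Z ≥ |V_{1+}| · |V_{0+}|, where V_{1+} is the set of infected individuals each of whose tests contains another infected individual, and V_{0+} is the set of uninfected individuals all of whose tests are positive. Concretely: for each pair (x, y) with x ∈ V_{1+} and y ∈ V_{0+}, swapping the statuses of x and y yields a distinct assignment producing the same test outcomes. -/

import Mathlib

open Finset
open scoped Classical

/-- The number of infection-status assignments consistent with the test outcomes is at
least `|V₁₊| · |V₀₊|`: swapping a totally disguised infected individual with a disguised
uninfected one yields a distinct assignment with the same outcomes. -/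
theorem stmt_3 {V F : Type*} [Fintype V] [DecidableEq V] [Fintype F]
    (tests : F → Finset V) (σ : V → Bool) :
    let outcome : (V → Bool) → F → Prop := fun τ a => ∃ x ∈ tests a, τ x = true
    let k : ℕ := (Finset.univ.filter fun x => σ x = true).card
    let V1p : Finset V := Finset.univ.filter fun x =>
      σ x = true ∧ ∀ a, x ∈ tests a → ∃ y ∈ tests a, y ≠ x ∧ σ y = true
    let V0p : Finset V := Finset.univ.filter fun x =>
      σ x = false ∧ ∀ a, x ∈ tests a → ∃ y ∈ tests a, σ y = true
    let Z : ℕ := (Finset.univ.filter fun τ : V → Bool =>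
      (Finset.univ.filter fun x => τ x = true).card = k ∧
        ∀ a, outcome τ a ↔ outcome σ a).card
    V1p.card * V0p.card ≤ Z := by
  intro outcome k V1p V0p Z
  classical
  have key : (V1p ×ˢ V0p).card ≤ Z := by
    apply Finset.card_le_card_of_injOn
      (fun p => Function.update (Function.update σ p.1 false) p.2 true)
    · rintro ⟨x, y⟩ hp
      obtain ⟨hx, hy⟩ := Finset.mem_product.mp hp
      obtain ⟨hσx, hx2⟩ := (Finset.mem_filter.mp hx).2
      obtain ⟨hσy, hy2⟩ := (Finset.mem_filter.mp hy).2
      have hxy : x ≠ y := by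
        intro h; rw [h, hσy] at hσx; exact absurd hσx (by simp)
      set τ : V → Bool := Function.update (Function.update σ x false) y true with hτdef
      have hτ : ∀ v, τ v = if v = y then true else if v = x then false else σ v := by
        intro v
        simp [hτdef, Function.update_apply]
      refine Finset.mem_filter.mpr ⟨Finset.mem_univ _, ?_, ?_⟩
      · have hset : (Finset.univ.filter fun v => τ v = true)
            = insert y ((Finset.univ.filter fun v => σ v = true).erase x) := by
          ext v
          by_cases hvy : v = y
          · subst hvy; simp [hτ]
          · by_cases hvx : v = x
            · subst hvx; simp [hτ, hvy, Ne.symm hvy]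
            · simp [hτ, hvy, hvx]
        have hxmem : x ∈ (Finset.univ.filter fun v => σ v = true) := by
          simp [hσx]
        have hynot : y ∉ (Finset.univ.filter fun v => σ v = true).erase x := by
          simp [hσy]
        rw [hset, Finset.card_insert_of_notMem hynot, Finset.card_erase_of_mem hxmem]
        have hk1 : 1 ≤ k := Finset.card_pos.mpr ⟨x, hxmem⟩
        omega
      · intro a
        constructor
        · rintro ⟨z, hza, hz⟩
          by_cases hzy : z = y
          · subst hzy
            obtain ⟨w, hwa, hw⟩ := hy2 a hza
            exact ⟨w, hwa, hw⟩
          · change τ z = true at hz; rw [hτ z, if_neg hzy] at hz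
            by_cases hzx : z = x
            · rw [if_pos hzx] at hz; exact absurd hz (by simp)
            · rw [if_neg hzx] at hz; exact ⟨z, hza, hz⟩
        · rintro ⟨z, hza, hz⟩
          by_cases hzx : z = x
          · subst hzx
            obtain ⟨w, hwa, hwz, hw⟩ := hx2 a hza
            have hwy : w ≠ y := by
              intro h; rw [h, hσy] at hw; exact absurd hw (by simp)
            refine ⟨w, hwa, ?_⟩
            change τ w = true; rw [hτ w, if_neg hwy, if_neg hwz]; exact hw
          · have hzy : z ≠ y := by
              intro h; rw [h, hσy] at hz; exact absurd hz (by simp)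
            refine ⟨z, hza, ?_⟩
            change τ z = true; rw [hτ z, if_neg hzy, if_neg hzx]; exact hz
    · rintro ⟨x, y⟩ hp ⟨x', y'⟩ hp' heq
      obtain ⟨hx, hy⟩ := Finset.mem_product.mp hp
      obtain ⟨hx', hy'⟩ := Finset.mem_product.mp hp'
      have hσx := ((Finset.mem_filter.mp hx).2).1
      have hσy := ((Finset.mem_filter.mp hy).2).1
      have hσx' := ((Finset.mem_filter.mp hx').2).1
      have hσy' := ((Finset.mem_filter.mp hy').2).1
      have hxy : x ≠ y := by
        intro h; rw [h, hσy] at hσx; exact absurd hσx (by simp)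
      have hxy' : x' ≠ y' := by
        intro h; rw [h, hσy'] at hσx'; exact absurd hσx' (by simp)
      have hτ : ∀ v, Function.update (Function.update σ x false) y true v
          = if v = y then true else if v = x then false else σ v := by
        intro v; simp [Function.update_apply]
      have hτ' : ∀ v, Function.update (Function.update σ x' false) y' true v
          = if v = y' then true else if v = x' then false else σ v := by
        intro v; simp [Function.update_apply]
      have heqv : ∀ v, (if v = y then (true : Bool) else if v = x then false else σ v)
          = if v = y' then true else if v = x' then false else σ v := by
        intro v
        rw [← hτ v, ← hτ' v]
        exact congrFun heq v
      have hxx : x = x' := by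
        have h := heqv x'
        rw [if_neg hxy', if_pos rfl] at h
        by_cases hc : x' = y
        · rw [if_pos hc] at h; exact absurd h (by simp)
        · rw [if_neg hc] at h
          by_cases hc2 : x' = x
          · exact hc2.symm
          · rw [if_neg hc2, hσx'] at h; exact absurd h (by simp)
      have hyy : y = y' := by
        have h := heqv y'
        rw [if_pos rfl] at h
        by_cases hc : y' = y
        · exact hc.symm
        · rw [if_neg hc] at h
          by_cases hc2 : y' = x
          · rw [if_pos hc2] at h; exact absurd h (by simp)
          · rw [if_neg hc2, hσy'] at h; exact absurd h (by simp)
      simp [Prod.ext_iff, hxx, hyy]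
  calc V1p.card * V0p.card = (V1p ×ˢ V0p).card := (Finset.card_product _ _).symm
    _ ≤ Z := key
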